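/- For λ in the positive cone Γ₊ ⊂ ℝⁿ and 1 ≤ k < n, if f(λ) = (n/k)·[σ₁(λ) − (k+1)·σ_{k+1}(λ)/σ_k(λ)], then Σᵢ ∂f/∂λᵢ ≤ n. -/

import Mathlib

/-- The k-th elementary symmetric polynomial of `lam : Fin n → ℝ`. -/
noncomputable def sigmaE (n k : ℕ) (lam : Fin n → ℝ) : ℝ :=
  ∑ s ∈ Finset.powersetCard k (Finset.univ : Finset (Fin n)), ∏ i ∈ s, lam i

open Finset Polynomial

theorem exists_fn (s : Multiset ℝ) : ∃ g : Fin (Multiset.card s) → ℝ, (Finset.univ.val.map g) = s := by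
  refine ⟨fun i => s.toList.get (i.cast (Multiset.length_toList s).symm), ?_⟩
  have h1 : (Finset.univ.val : Multiset (Fin (Multiset.card s))) = ↑(List.finRange (Multiset.card s)) := rfl
  rw [h1, Multiset.map_coe, ← List.ofFn_eq_map]
  conv_rhs => rw [← Multiset.coe_toList s]
  congr 1
  apply List.ext_get
  · simp [Multiset.length_toList]
  intro i h1 h2
  simp

lemma sigmaE_pos (n k : ℕ) (hk : k ≤ n) (lam : Fin n → ℝ) (h : ∀ i, 0 < lam i) :
    0 < sigmaE n k lam := by
  unfold sigmaE
  apply Finset.sum_pos (fun s _ => Finset.prod_pos fun i _ => h i)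
  rw [Finset.nonempty_iff_ne_empty]
  intro hc
  rw [Finset.powersetCard_eq_empty] at hc
  simp at hc; omega

lemma sigmaE_zero (n : ℕ) (lam : Fin n → ℝ) : sigmaE n 0 lam = 1 := by
  unfold sigmaE; simp

lemma pcard_one (n : ℕ) (u : Finset (Fin n)) (lam : Fin n → ℝ) :
    ∑ t ∈ powersetCard 1 u, ∏ j ∈ t, lam j = ∑ j ∈ u, lam j := by
  rw [Finset.powersetCard_one, Finset.sum_map]; simp

lemma sigmaE_one (n : ℕ) (lam : Fin n → ℝ) : sigmaE n 1 lam = ∑ i, lam i :=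
  pcard_one n univ lam

lemma sigmaE_top (n : ℕ) (lam : Fin n → ℝ) : sigmaE n n lam = ∏ i, lam i := by
  unfold sigmaE
  have : powersetCard n (univ : Finset (Fin n)) = {univ} := by
    have := Finset.powersetCard_self (univ : Finset (Fin n))
    simpa using this
  rw [this]; simp

lemma DC (n m : ℕ) (g lam : Fin n → ℝ) :
    ∑ s ∈ powersetCard (m+1) (univ : Finset (Fin n)), ∑ i ∈ s, g i * ∏ j ∈ s.erase i, lam j
    = ∑ i, g i * ∑ t ∈ powersetCard m ((univ : Finset (Fin n)).erase i), ∏ j ∈ t, lam j := by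
  simp_rw [Finset.mul_sum]
  rw [Finset.sum_sigma', Finset.sum_sigma']
  apply Finset.sum_nbij' (i := fun p => (⟨p.2, p.1.erase p.2⟩ : (_ : Fin n) × Finset (Fin n)))
    (j := fun p => (⟨insert p.1 p.2, p.1⟩ : (_ : Finset (Fin n)) × Fin n))
  · rintro ⟨s, i⟩ hp
    simp only [Finset.mem_sigma, Finset.mem_powersetCard] at hp ⊢
    have hcard := hp.1.2
    have hi := hp.2
    refine ⟨Finset.mem_univ _, ?_, ?_⟩
    · intro j hj
      rw [Finset.mem_erase] at hj ⊢
      exact ⟨hj.1, Finset.mem_univ _⟩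
    · rw [Finset.card_erase_of_mem hi, hcard]; omega
  · rintro ⟨i, t⟩ hp
    simp only [Finset.mem_sigma, Finset.mem_powersetCard, Finset.subset_erase] at hp
    obtain ⟨-, ⟨⟨hsub, hni⟩, hcard⟩⟩ := hp
    simp only [Finset.mem_sigma, Finset.mem_powersetCard]
    exact ⟨⟨Finset.subset_univ _, by rw [Finset.card_insert_of_notMem hni, hcard]⟩,
      Finset.mem_insert_self _ _⟩
  · rintro ⟨s, i⟩ hp
    simp only [Finset.mem_sigma] at hp
    simp [Finset.insert_erase hp.2]
  · rintro ⟨i, t⟩ hp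
    simp only [Finset.mem_sigma, Finset.mem_powersetCard, Finset.subset_erase] at hp
    simp [Finset.erase_insert hp.2.1.2]
  · rintro ⟨s, i⟩ hp
    simp only [Finset.mem_sigma] at hp
    simp [Finset.erase_insert]

lemma sum_partial (n m : ℕ) (lam : Fin n → ℝ) :
    ∑ i : Fin n, ∑ t ∈ powersetCard m ((univ : Finset (Fin n)).erase i), ∏ j ∈ t, lam j
      = ((n - m : ℕ) : ℝ) * sigmaE n m lam := by
  have key : ∀ i : Fin n, powersetCard m ((univ : Finset (Fin n)).erase i)
      = (powersetCard m (univ : Finset (Fin n))).filter (fun t => i ∉ t) := by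
    intro i; ext t
    simp only [Finset.mem_powersetCard, Finset.mem_filter, Finset.subset_erase]
    constructor
    · rintro ⟨⟨h1, h2⟩, h3⟩; exact ⟨⟨h1, h3⟩, h2⟩
    · rintro ⟨⟨h1, h3⟩, h2⟩; exact ⟨⟨h1, h2⟩, h3⟩
  simp_rw [key, Finset.sum_filter]
  rw [Finset.sum_comm]
  unfold sigmaE
  rw [Finset.mul_sum]
  apply Finset.sum_congr rfl
  intro t ht
  have hc : t.card = m := (Finset.mem_powersetCard.1 ht).2
  rw [Finset.sum_ite, Finset.sum_const, Finset.sum_const_zero, add_zero]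
  have h2 : (univ.filter (fun i => i ∉ t)) = tᶜ := by ext i; simp
  rw [h2, Finset.card_compl, hc]
  simp [nsmul_eq_mul]

lemma euler (n m : ℕ) (lam : Fin n → ℝ) :
    ∑ s ∈ powersetCard m (univ : Finset (Fin n)), ∑ i ∈ s, lam i * ∏ j ∈ s.erase i, lam j
      = (m : ℝ) * sigmaE n m lam := by
  unfold sigmaE; rw [Finset.mul_sum]
  apply Finset.sum_congr rfl
  intro s hs
  have hc : s.card = m := (Finset.mem_powersetCard.1 hs).2
  calc ∑ i ∈ s, lam i * ∏ j ∈ s.erase i, lam j = ∑ _i ∈ s, ∏ j ∈ s, lam j :=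
        Finset.sum_congr rfl fun i hi => Finset.mul_prod_erase s lam hi
    _ = (m : ℝ) * ∏ j ∈ s, lam j := by rw [Finset.sum_const, hc, nsmul_eq_mul]

lemma compF (n m : ℕ) (hm : m ≤ n) (lam : Fin n → ℝ) (h0 : ∀ i, lam i ≠ 0) :
    sigmaE n (n - m) lam = (∏ i, lam i) * sigmaE n m (fun i => (lam i)⁻¹) := by
  unfold sigmaE
  rw [Finset.mul_sum]
  apply Finset.sum_nbij' (i := fun t => univ \ t) (j := fun t => univ \ t)
  · intro t ht
    rw [Finset.mem_powersetCard] at ht ⊢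
    refine ⟨Finset.subset_univ _, ?_⟩
    rw [Finset.card_sdiff_of_subset (Finset.subset_univ t), ht.2]
    simp; omega
  · intro t ht
    rw [Finset.mem_powersetCard] at ht ⊢
    refine ⟨Finset.subset_univ _, ?_⟩
    rw [Finset.card_sdiff_of_subset (Finset.subset_univ t), ht.2]
    simp
  · intro t ht
    simp [Finset.sdiff_sdiff_self_left, Finset.inter_eq_right.2 (Finset.subset_univ t)]
  · intro t ht
    simp [Finset.sdiff_sdiff_self_left, Finset.inter_eq_right.2 (Finset.subset_univ t)]
  · intro t ht
    have hsub : univ \ t ⊆ univ := Finset.subset_univ _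
    have hprod : (∏ j ∈ univ \ t, lam j) * ∏ j ∈ t, lam j = ∏ i, lam i :=
      Finset.prod_sdiff (Finset.subset_univ t)
    have hne : (∏ j ∈ univ \ t, lam j) ≠ 0 := Finset.prod_ne_zero_iff.2 fun i _ => h0 i
    rw [Finset.prod_inv_distrib]
    field_simp
    linarith [hprod]

lemma SQ (n : ℕ) (lam : Fin n → ℝ) :
    2 * sigmaE n 2 lam = (∑ i, lam i)^2 - ∑ i, (lam i)^2 := by
  have h1 := DC n 1 lam lam
  have h2 := euler n 2 lam
  rw [h2] at h1
  simp_rw [pcard_one] at h1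
  have h3 : ∀ i : Fin n, ∑ j ∈ (univ : Finset (Fin n)).erase i, lam j = (∑ j, lam j) - lam i :=
    fun i => Finset.sum_erase_eq_sub (Finset.mem_univ i)
  simp_rw [h3, mul_sub] at h1
  rw [Finset.sum_sub_distrib, ← Finset.sum_mul] at h1
  push_cast at h1
  simp only [pow_two]
  linarith [h1]

lemma newton_base (n j : ℕ) (hn : n = j + 2) (lam : Fin n → ℝ) (hpos : ∀ i, 0 < lam i) :
    ((j:ℝ)+2) * ((n:ℝ)-j) * sigmaE n j lam * sigmaE n (j+2) lam
      ≤ ((j:ℝ)+1) * ((n:ℝ)-j-1) * sigmaE n (j+1) lam ^ 2 := by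
  subst hn
  have h0 : ∀ i, lam i ≠ 0 := fun i => (hpos i).ne'
  have hP : 0 < ∏ i, lam i := Finset.prod_pos fun i _ => hpos i
  have c2 := compF (j+2) 2 (by omega) lam h0
  have c1 := compF (j+2) 1 (by omega) lam h0
  have c0 := compF (j+2) 0 (by omega) lam h0
  have e2 : j + 2 - 2 = j := by omega
  have e1 : j + 2 - 1 = j + 1 := by omega
  have e0 : j + 2 - 0 = j + 2 := by omega
  rw [e2] at c2; rw [e1] at c1; rw [e0] at c0
  rw [sigmaE_zero, mul_one] at c0
  rw [sigmaE_one] at c1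
  rw [c2, c1, c0]
  set μ : Fin (j+2) → ℝ := fun i => (lam i)⁻¹ with hμ
  set P : ℝ := ∏ i, lam i with hPdef
  set A := ∑ i, μ i with hA
  set S := ∑ i, (μ i)^2 with hS
  set σ₂ := sigmaE (j+2) 2 μ with hσ₂
  have hSQ : 2 * σ₂ = A^2 - S := SQ (j+2) μ
  have hCS : A^2 ≤ ((j:ℝ)+2) * S := by
    have := sq_sum_le_card_mul_sum_sq (s := (univ : Finset (Fin (j+2)))) (f := μ)
    simpa [hA, hS] using this
  have hSQ2 : 2 * (P*P*σ₂) = P*P*A^2 - P*P*S := by linear_combination (P*P) * hSQ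
  have hCS2 : P*P*A^2 ≤ ((j:ℝ)+2) * (P*P*S) :=  by nlinarith [mul_pos hP hP]
  push_cast
  nlinarith [hSQ2, hCS2]

lemma exists_fn' (s : Multiset ℝ) (m : ℕ) (h : Multiset.card s = m) :
    ∃ g : Fin m → ℝ, (Finset.univ.val.map g) = s := by
  subst h; exact exists_fn s

lemma esymm_eq_sigmaE (m : ℕ) (g : Fin m → ℝ) (k : ℕ) :
    (Multiset.map g Finset.univ.val).esymm k = sigmaE m k g := by
  rw [Finset.esymm_map_val]; rfl

lemma mprod_nonneg (s : Multiset ℝ) (h : ∀ x ∈ s, 0 ≤ x) : 0 ≤ s.prod := by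
  induction s using Multiset.induction with
  | empty => simp
  | cons a t ih =>
    rw [Multiset.prod_cons]
    exact mul_nonneg (h a (Multiset.mem_cons_self a t))
      (ih fun x hx => h x (Multiset.mem_cons_of_mem hx))

lemma esymm_nonneg (s : Multiset ℝ) (h : ∀ x ∈ s, 0 ≤ x) (k : ℕ) : 0 ≤ s.esymm k := by
  apply Multiset.sum_nonneg
  intro x hx
  rw [Multiset.mem_map] at hx
  obtain ⟨t, ht, rfl⟩ := hx
  exact mprod_nonneg t fun y hy =>
    h y (Multiset.mem_of_le (Multiset.mem_powersetCard.1 ht).1 hy)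

lemma esymm_zero' (s : Multiset ℝ) : s.esymm 0 = 1 := by
  simp [Multiset.esymm]

theorem newtonM : ∀ (n : ℕ) (s : Multiset ℝ), Multiset.card s = n → (∀ x ∈ s, 0 < x) →
    ∀ j : ℕ, j + 2 ≤ n →
    ((j:ℝ)+2) * ((n:ℝ)-(j:ℝ)) * s.esymm j * s.esymm (j+2)
      ≤ ((j:ℝ)+1) * ((n:ℝ)-(j:ℝ)-1) * s.esymm (j+1) ^ 2 := by
  intro n
  induction n with
  | zero => intro s hc hp j hj; omega
  | succ n ih =>
    intro s hcard hpos j hj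
    obtain ⟨g, hg⟩ := exists_fn' s (n+1) hcard
    have hgpos : ∀ i, 0 < g i := by
      intro i
      apply hpos
      rw [← hg]
      exact Multiset.mem_map.2 ⟨i, Finset.mem_univ_val i, rfl⟩
    have hrw : ∀ k, s.esymm k = sigmaE (n+1) k g := fun k => by
      rw [← hg, esymm_eq_sigmaE]
    rcases eq_or_lt_of_le hj with heq | hlt
    · -- base case
      have hb := newton_base (n+1) j heq.symm g hgpos
      rw [hrw j, hrw (j+1), hrw (j+2)]
      exact_mod_cast hb
    · -- inductive step: j + 2 ≤ n
      have hjn : j + 2 ≤ n := by omega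
      set N := n + 1 with hNdef
      -- polynomial
      set p : ℝ[X] := (s.map fun a => Polynomial.X + Polynomial.C a).prod with hp
      have hmon : ∀ f ∈ s.map (fun a => Polynomial.X + Polynomial.C a), f.Monic := by
        intro f hf
        rw [Multiset.mem_map] at hf
        obtain ⟨a, _, rfl⟩ := hf
        exact monic_X_add_C a
      have hmonic : p.Monic := monic_multiset_prod_of_monic _ _ (fun a _ => monic_X_add_C a)
      have hdeg : p.natDegree = N := by
        rw [hp, natDegree_multiset_prod_of_monic _ hmon]
        rw [Multiset.map_map]
        simp only [Function.comp]
        rw [Multiset.map_congr rfl (fun a _ => natDegree_X_add_C a)]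
        simp [Multiset.map_const, hcard]
      have hroots : p.roots = s.map (fun a => -a) := by
        have h1 : (s.map fun a => Polynomial.X + Polynomial.C a)
            = (s.map (fun a => -a)).map (fun a => Polynomial.X - Polynomial.C a) := by
          rw [Multiset.map_map]
          apply Multiset.map_congr rfl
          intro a _
          simp [sub_neg_eq_add]
        rw [hp, h1, roots_multiset_prod_X_sub_C]
      have hcoeff : ∀ m, m ≤ N → p.coeff m = s.esymm (N - m) := by
        intro m hm
        rw [hp, Multiset.prod_X_add_C_coeff s (by rw [hcard]; exact hm), hcard]
      set q := derivative p with hq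
      have hqcoeff : ∀ m, m + 1 ≤ N → q.coeff m = ((m:ℝ)+1) * s.esymm (N - (m+1)) := by
        intro m hm
        rw [hq, coeff_derivative, hcoeff (m+1) hm]
        ring
      have hcN : q.coeff (N-1) = (N:ℝ) := by
        rw [hqcoeff (N-1) (by omega)]
        have e1 : N - (N - 1 + 1) = 0 := by omega
        rw [e1, esymm_zero', mul_one]
        have : ((N-1:ℕ):ℝ) = (N:ℝ) - 1 := by
          push_cast [Nat.cast_sub (by omega : 1 ≤ N)]; ring
        rw [this]; ring
      have hNne : ((N:ℝ)) ≠ 0 := by positivity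
      have hqne : q ≠ 0 := by
        intro h; rw [h, coeff_zero] at hcN; exact hNne hcN.symm
      have hqdeg : q.natDegree = N - 1 := by
        apply le_antisymm
        · have := natDegree_derivative_le p; rwa [hdeg] at this
        · exact le_natDegree_of_ne_zero (by rw [hcN]; exact hNne)
      have hqlead : q.leadingCoeff = (N:ℝ) := by
        rw [Polynomial.leadingCoeff, hqdeg, hcN]
      have hproots : Multiset.card p.roots = N := by rw [hroots]; simp [hcard]
      have hqcard : Multiset.card q.roots = N - 1 := by
        have h1 : Multiset.card p.roots ≤ Multiset.card q.roots + 1 :=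
          Polynomial.card_roots_le_derivative p
        have h2 := Polynomial.card_roots' q
        rw [hqdeg] at h2
        rw [hproots] at h1
        omega
      have hsplits : Splits q := by
        rw [Polynomial.splits_iff_card_roots, hqcard, hqdeg]
      have hfact := hsplits.eq_prod_roots
      -- coefficients of q are nonneg, coeff 0 positive; roots negative
      have hqcoeff_nonneg : ∀ m, 0 ≤ q.coeff m := by
        intro m
        by_cases hm : m + 1 ≤ N
        · rw [hqcoeff m hm]
          apply mul_nonneg (by positivity)
          exact esymm_nonneg s (fun x hx => (hpos x hx).le) _
        · have : q.natDegree < m := by omega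
          rw [Polynomial.coeff_eq_zero_of_natDegree_lt this]
      have hq0pos : 0 < q.coeff 0 := by
        rw [hqcoeff 0 (by omega)]
        simp only [Nat.cast_zero, zero_add, one_mul]
        rw [hrw (N-1)]
        exact sigmaE_pos _ _ (by omega) _ hgpos
      have hrootsneg : ∀ r ∈ q.roots, r < 0 := by
        intro r hr
        by_contra hge
        push_neg at hge
        have hr0 : q.eval r = 0 := (Polynomial.mem_roots hqne).1 hr
        have : 0 < q.eval r := by
          rw [Polynomial.eval_eq_sum_range]
          apply Finset.sum_pos'
          · intro m _
            exact mul_nonneg (hqcoeff_nonneg m) (pow_nonneg hge m)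
          · refine ⟨0, Finset.mem_range.2 (by omega), ?_⟩
            simpa using hq0pos
        linarith
      -- roots of q, negated, form a positive multiset of card n
      set t : Multiset ℝ := q.roots.map (fun r => -r) with ht
      have htcard : Multiset.card t = n := by
        rw [ht, Multiset.card_map, hqcard]; omega
      have htpos : ∀ x ∈ t, 0 < x := by
        intro x hx
        rw [ht, Multiset.mem_map] at hx
        obtain ⟨r, hr, rfl⟩ := hx
        have := hrootsneg r hr; linarith
      have hfact2 : q = C ((N:ℝ)) * (t.map fun a => Polynomial.X + Polynomial.C a).prod := by
        rw [hfact, hqlead]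
        congr 1
        rw [ht, Multiset.map_map]
        congr 1
        apply Multiset.map_congr rfl
        intro r _
        simp [sub_eq_add_neg]
      have KEY : ∀ e, e ≤ n → (N:ℝ) * t.esymm e = ((N:ℝ) - (e:ℝ)) * s.esymm e := by
        intro e he
        have hm : N - 1 - e + 1 ≤ N := by omega
        have h1 := hqcoeff (N-1-e) hm
        have h2 : q.coeff (N-1-e) = (N:ℝ) * t.esymm e := by
          rw [hfact2, coeff_C_mul,
            Multiset.prod_X_add_C_coeff t (by rw [htcard]; omega)]
          congr 2
          rw [htcard]; omega
        rw [h2] at h1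
        rw [h1]
        have e1 : N - (N - 1 - e + 1) = e := by omega
        rw [e1]
        congr 1
        have : ((N - 1 - e : ℕ) : ℝ) = (N:ℝ) - 1 - e := by
          push_cast [Nat.cast_sub (by omega : e ≤ N - 1), Nat.cast_sub (by omega : 1 ≤ N)]
          ring
        rw [this]; ring
      have IH := ih t htcard htpos j hjn
      have H := mul_le_mul_of_nonneg_left IH (by positivity : (0:ℝ) ≤ (N:ℝ)^2)
      have eL : (N:ℝ)^2 * (((j:ℝ)+2) * ((n:ℝ)-(j:ℝ)) * t.esymm j * t.esymm (j+2))
          = ((j:ℝ)+2) * ((n:ℝ)-(j:ℝ)) * ((N:ℝ) * t.esymm j) * ((N:ℝ) * t.esymm (j+2)) := by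
        ring
      have eR : (N:ℝ)^2 * (((j:ℝ)+1) * ((n:ℝ)-(j:ℝ)-1) * t.esymm (j+1)^2)
          = ((j:ℝ)+1) * ((n:ℝ)-(j:ℝ)-1) * ((N:ℝ) * t.esymm (j+1))^2 := by
        ring
      rw [eL, eR, KEY j (by omega), KEY (j+1) (by omega), KEY (j+2) (by omega)] at H
      have hn' : (n:ℝ) = (N:ℝ) - 1 := by rw [hNdef]; push_cast; ring
      rw [hn'] at H
      have hjN : (j:ℝ) + 3 ≤ (N:ℝ) := by exact_mod_cast (by omega : j + 3 ≤ N)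
      have hC : (0:ℝ) < (N:ℝ) - (j:ℝ) - 2 := by linarith
      have hD : (0:ℝ) < (N:ℝ) - (j:ℝ) - 1 := by linarith
      have hcast2 : ((j:ℝ)+1) = ((j+1:ℕ):ℝ) := by push_cast; ring
      have hcast3 : ((j:ℝ)+2) = ((j+2:ℕ):ℝ) := by push_cast; ring
      rw [← hcast2, ← hcast3] at H
      apply le_of_mul_le_mul_left ?_ (mul_pos hC hD)
      linarith [H]

theorem newtonF (n j : ℕ) (hj : j + 2 ≤ n) (lam : Fin n → ℝ) (hpos : ∀ i, 0 < lam i) :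
    ((j:ℝ)+2) * ((n:ℝ)-(j:ℝ)) * sigmaE n j lam * sigmaE n (j+2) lam
      ≤ ((j:ℝ)+1) * ((n:ℝ)-(j:ℝ)-1) * sigmaE n (j+1) lam ^ 2 := by
  have hc : Multiset.card (Multiset.map lam Finset.univ.val) = n := by simp
  have h := newtonM n (Multiset.map lam Finset.univ.val) hc
    (fun x hx => by
      obtain ⟨i, _, rfl⟩ := Multiset.mem_map.1 hx
      exact hpos i) j hj
  rw [esymm_eq_sigmaE n lam j, esymm_eq_sigmaE n lam (j+1), esymm_eq_sigmaE n lam (j+2)] at h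
  exact h

noncomputable def lamD (n m : ℕ) (lam : Fin n → ℝ) : (Fin n → ℝ) →L[ℝ] ℝ :=
  ∑ s ∈ powersetCard m (univ : Finset (Fin n)), ∑ i ∈ s,
    (∏ j ∈ s.erase i, lam j) • (ContinuousLinearMap.proj i : (Fin n → ℝ) →L[ℝ] ℝ)

lemma hasFDeriv_sigmaE (n m : ℕ) (lam : Fin n → ℝ) :
    HasFDerivAt (sigmaE n m) (lamD n m lam) lam := by
  have h : HasFDerivAt (fun x : Fin n → ℝ => ∑ s ∈ powersetCard m (univ : Finset (Fin n)), ∏ i ∈ s, x i)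
      (lamD n m lam) lam := by
    apply HasFDerivAt.fun_sum
    intro s _
    exact HasFDerivAt.finset_prod
      (fun i _ => (ContinuousLinearMap.proj i : (Fin n → ℝ) →L[ℝ] ℝ).hasFDerivAt)
  exact h

lemma sumD (n m : ℕ) (lam : Fin n → ℝ) :
    ∑ i0 : Fin n, (lamD n (m+1) lam) (Pi.single i0 1) = ((n - m : ℕ) : ℝ) * sigmaE n m lam := by
  unfold lamD
  simp only [ContinuousLinearMap.coe_sum', Finset.sum_apply, ContinuousLinearMap.coe_smul',
    Pi.smul_apply, ContinuousLinearMap.proj_apply, smul_eq_mul]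
  rw [Finset.sum_comm]
  have step : ∀ s ∈ powersetCard (m+1) (univ : Finset (Fin n)),
      ∑ i0 : Fin n, ∑ i ∈ s, (∏ j ∈ s.erase i, lam j) * ((Pi.single i0 1 : Fin n → ℝ) i)
        = ∑ i ∈ s, (1:ℝ) * ∏ j ∈ s.erase i, lam j := by
    intro s _
    rw [Finset.sum_comm]
    apply Finset.sum_congr rfl
    intro i _
    rw [← Finset.mul_sum]
    have : ∑ i0 : Fin n, (Pi.single i0 1 : Fin n → ℝ) i = 1 := by
      have e : ∀ i0 : Fin n, (Pi.single i0 1 : Fin n → ℝ) i = if i = i0 then 1 else 0 := by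
        intro i0
        rcases eq_or_ne i i0 with h | h
        · subst h; simp
        · simp [Pi.single_apply, h]
      simp_rw [e]
      simp
    rw [this, mul_one, one_mul]
  rw [Finset.sum_congr rfl step, DC n m (fun _ => 1) lam]
  simp_rw [one_mul]
  exact sum_partial n m lam

theorem stmt6 (n k : ℕ) (hk1 : 1 ≤ k) (hkn : k < n) (lam : Fin n → ℝ)
    (hlam : ∀ i, 0 < lam i) :
    ∑ i, fderiv ℝ
        (fun x => ((n : ℝ) / k) *
          (sigmaE n 1 x - (k + 1 : ℝ) * sigmaE n (k + 1) x / sigmaE n k x))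
        lam (Pi.single i 1) ≤ (n : ℝ) := by
  have hσk : 0 < sigmaE n k lam := sigmaE_pos n k hkn.le lam hlam
  have hσk1 : 0 < sigmaE n (k+1) lam := sigmaE_pos n (k+1) hkn lam hlam
  have hσkm : 0 < sigmaE n (k-1) lam := sigmaE_pos n (k-1) (by omega) lam hlam
  have hd1 := hasFDeriv_sigmaE n 1 lam
  have hdk := hasFDeriv_sigmaE n k lam
  have hdk1 := hasFDeriv_sigmaE n (k+1) lam
  have hnum : HasFDerivAt (fun x => (k+1:ℝ) * sigmaE n (k+1) x)
      ((k+1:ℝ) • lamD n (k+1) lam) lam := hdk1.const_mul _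
  have hinv : HasFDerivAt (fun x : Fin n → ℝ => (sigmaE n k x)⁻¹)
      ((-(sigmaE n k lam ^ 2)⁻¹) • lamD n k lam) lam :=
    (hasDerivAt_inv hσk.ne').comp_hasFDerivAt lam hdk
  have hmul := hnum.mul hinv
  have hsub := hd1.sub hmul
  have hf := hsub.const_mul ((n:ℝ)/(k:ℝ))
  have hfun : (fun x : Fin n → ℝ => ((n : ℝ) / k) *
      (sigmaE n 1 x - (k + 1 : ℝ) * sigmaE n (k + 1) x / sigmaE n k x))
      = (fun x : Fin n → ℝ => ((n : ℝ) / k) *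
      (sigmaE n 1 x - ((k + 1 : ℝ) * sigmaE n (k + 1) x) * (sigmaE n k x)⁻¹)) := by
    funext x
    rw [div_eq_mul_inv ((k + 1 : ℝ) * sigmaE n (k + 1) x) (sigmaE n k x)]
  rw [hfun, (show HasFDerivAt (fun x : Fin n → ℝ => ((n : ℝ) / k) *
      (sigmaE n 1 x - ((k + 1 : ℝ) * sigmaE n (k + 1) x) * (sigmaE n k x)⁻¹)) _ lam from hf).fderiv]
  -- expand applications
  set F1 := lamD n 1 lam
  set Fk := lamD n k lam
  set Fk1 := lamD n (k+1) lam
  have expand : ∀ i0 : Fin n,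
      (((n:ℝ)/(k:ℝ)) • (F1 - (((k+1:ℝ) * sigmaE n (k+1) lam) • ((-(sigmaE n k lam ^ 2)⁻¹) • Fk)
        + (sigmaE n k lam)⁻¹ • ((k+1:ℝ) • Fk1)))) (Pi.single i0 1)
      = ((n:ℝ)/(k:ℝ)) * (F1 (Pi.single i0 1))
        + ((n:ℝ)/(k:ℝ)) * ((k+1:ℝ) * sigmaE n (k+1) lam * (sigmaE n k lam ^ 2)⁻¹) * (Fk (Pi.single i0 1))
        - ((n:ℝ)/(k:ℝ)) * ((k+1:ℝ) * (sigmaE n k lam)⁻¹) * (Fk1 (Pi.single i0 1)) := by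
    intro i0
    simp only [ContinuousLinearMap.smul_apply, ContinuousLinearMap.sub_apply,
      ContinuousLinearMap.add_apply, smul_eq_mul]
    ring
  rw [Finset.sum_congr rfl (fun i0 _ => expand i0)]
  rw [Finset.sum_sub_distrib, Finset.sum_add_distrib, ← Finset.mul_sum, ← Finset.mul_sum,
    ← Finset.mul_sum]
  -- values of the sums
  have hS1 : ∑ i0 : Fin n, F1 (Pi.single i0 1) = (n:ℝ) := by
    have := sumD n 0 lam
    rw [sigmaE_zero] at this
    simpa using this
  have hSk1 : ∑ i0 : Fin n, Fk1 (Pi.single i0 1) = ((n:ℝ) - (k:ℝ)) * sigmaE n k lam := by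
    have := sumD n k lam
    rw [this]
    congr 1
    push_cast [Nat.cast_sub hkn.le]
    ring
  have hSk : ∑ i0 : Fin n, Fk (Pi.single i0 1) = ((n:ℝ) - (k:ℝ) + 1) * sigmaE n (k-1) lam := by
    have h := sumD n (k-1) lam
    have e : k - 1 + 1 = k := by omega
    rw [e] at h
    rw [h]
    congr 1
    have : ((n - (k-1) : ℕ) : ℝ) = (n:ℝ) - ((k:ℝ) - 1) := by
      push_cast [Nat.cast_sub (by omega : k - 1 ≤ n), Nat.cast_sub (by omega : 1 ≤ k)]
      ring
    rw [this]
    ring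
  rw [hS1, hSk, hSk1]
  -- Newton's inequality
  have NT0 := newtonF n (k-1) (by omega) lam hlam
  have e1 : k - 1 + 1 = k := by omega
  have e2 : k - 1 + 2 = k + 1 := by omega
  rw [e1, e2] at NT0
  have ec : ((k-1:ℕ):ℝ) = (k:ℝ) - 1 := by
    push_cast [Nat.cast_sub (by omega : 1 ≤ k)]
    ring
  rw [ec] at NT0
  -- NT0 : (k-1+2)*(n-(k-1)) * σ_{k-1} * σ_{k+1} ≤ (k-1+1)*(n-(k-1)-1) * σ_k^2
  set a := sigmaE n (k-1) lam
  set b := sigmaE n k lam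
  set c := sigmaE n (k+1) lam
  have NT : ((k:ℝ)+1) * ((n:ℝ)-(k:ℝ)+1) * a * c ≤ (k:ℝ) * ((n:ℝ)-(k:ℝ)) * b^2 := by
    nlinarith [NT0]
  have hK : (0:ℝ) < (k:ℝ) := by exact_mod_cast hk1
  have hN : (0:ℝ) < (n:ℝ) := by
    have : 0 < n := by omega
    exact_mod_cast this
  have hb : b ≠ 0 := hσk.ne'
  have hfactor : ((n:ℝ)/(k:ℝ)) * (n:ℝ)
        + ((n:ℝ)/(k:ℝ)) * ((k+1:ℝ) * c * (b ^ 2)⁻¹) * (((n:ℝ) - (k:ℝ) + 1) * a)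
        - ((n:ℝ)/(k:ℝ)) * ((k+1:ℝ) * b⁻¹) * (((n:ℝ) - (k:ℝ)) * b)
      = (n:ℝ) + ((n:ℝ)/((k:ℝ)*b^2)) *
          (((k:ℝ)+1)*((n:ℝ)-(k:ℝ)+1)*a*c - (k:ℝ)*((n:ℝ)-(k:ℝ))*b^2) := by
    field_simp
    ring
  rw [hfactor]
  have h2 : (0:ℝ) < (n:ℝ)/((k:ℝ)*b^2) := by positivity
  nlinarith [mul_nonneg h2.le (sub_nonneg.2 NT)]
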